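/- arXiv:0802.2730 — 2 statements merged into one kernel-verified Lean document; each statement's English description precedes it below -/
import Mathlib

section
/- Let A=(C,m) be a 3-dimensional toric idealistic cluster and suppose the node Q_i has a child Q_j along the edge labelled a with m_j = m_i. Let S_i be the set of labels under Q_i. Then: (i) if a ∈ S_i then χ_i = 0; (ii) if Q_i is the root (S_i = ∅) then χ_i = 2 − m_i; (iii) if a ∉ S_i and #S_i = 1 then χ_i = 1 − m_i; (iv) if a ∉ S_i and #S_i = 2 then χ_i = −m_i. -/
open Finset

/-!
Common framework: 3-dimensional toric constellations and toric idealistic clusters.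
The edge labels `1, 2, 3` of the paper are encoded as `0, 1, 2 : Fin 3`.
-/

/-- A 3-dimensional toric constellation: a finite rooted tree on nodes `0, …, r−1`
(node `0` the root, every child having larger index than its parent), each node having
at most three children, the edges from a node to its children carrying pairwise
distinct labels in `Fin 3`.  `label j` is the label of the edge from `parent j` to `j`
(irrelevant for the root). -/
structure ToricConstellation (r : ℕ) where
  parent : Fin r → Fin r
  label : Fin r → Fin 3
  parent_lt : ∀ i : Fin r, 0 < (i : ℕ) → (parent i : ℕ) < (i : ℕ)
  parent_root : ∀ i : Fin r, (i : ℕ) = 0 → parent i = i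
  label_distinct : ∀ i j : Fin r, 0 < (i : ℕ) → 0 < (j : ℕ) → i ≠ j →
    parent i = parent j → label i ≠ label j

namespace ToricConstellation

variable {r : ℕ}

/-- The ordered triple of vectors of `ℤ³` attached to a node: the root carries the
standard basis, and the child along the edge labelled `a` of a node with cone
`(u₁,u₂,u₃)` carries the triple obtained by replacing `u_a` with `u₁+u₂+u₃`. -/
def cone (C : ToricConstellation r) (i : Fin r) : Fin 3 → (Fin 3 → ℤ) :=
  if h : 0 < (i : ℕ) then
    Function.update (cone C (C.parent i)) (C.label i) (∑ a, cone C (C.parent i) a)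
  else fun a => Pi.single a 1
termination_by (i : ℕ)
decreasing_by all_goals exact C.parent_lt i h

/-- `v(Q) = u₁ + u₂ + u₃`, the sum of the cone vectors of a node. -/
def v (C : ToricConstellation r) (i : Fin r) : Fin 3 → ℤ := ∑ a, cone C i a

/-- `Prox C j i` means `j → i`, i.e. `Q_j` is proximate to `Q_i`:
`j ≠ i` and `v(Q_i)` is an entry of `cone(Q_j)`. -/
def Prox (C : ToricConstellation r) (j i : Fin r) : Prop :=
  j ≠ i ∧ ∃ a : Fin 3, cone C j a = v C i

instance (C : ToricConstellation r) (j i : Fin r) : Decidable (C.Prox j i) := by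
  unfold Prox; infer_instance

/-- `inChain C i a b j = true` iff `j = Q_i(a, b^t)` for some `t ≥ 0`, i.e. `j` is
reached from `i` by one edge labelled `a` followed by `t` edges labelled `b`. -/
def inChain (C : ToricConstellation r) (i : Fin r) (a b : Fin 3) (j : Fin r) : Bool :=
  if h : 0 < (j : ℕ) then
    (decide (C.parent j = i) && decide (C.label j = a)) ||
      (decide (C.label j = b) && inChain C i a b (C.parent j))
  else false
termination_by (j : ℕ)
decreasing_by exact C.parent_lt j h

/-- `LinProx C j i` means `j ↠ i`, i.e. `Q_j` is linearly proximate to `Q_i`. -/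
def LinProx (C : ToricConstellation r) (j i : Fin r) : Prop :=
  ∃ a b : Fin 3, a ≠ b ∧ inChain C i a b j = true

instance (C : ToricConstellation r) (j i : Fin r) : Decidable (C.LinProx j i) := by
  unfold LinProx; infer_instance

/-- `j` is a child of `i`. -/
def IsChild (C : ToricConstellation r) (j i : Fin r) : Prop :=
  0 < (j : ℕ) ∧ C.parent j = i

instance (C : ToricConstellation r) (j i : Fin r) : Decidable (C.IsChild j i) := by
  unfold IsChild; infer_instance

/-- The set `S_i` of labels of the edges on the path from the root to `Q_i`. -/
def labelsUnder (C : ToricConstellation r) (i : Fin r) : Finset (Fin 3) :=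
  if h : 0 < (i : ℕ) then insert (C.label i) (labelsUnder C (C.parent i)) else ∅
termination_by (i : ℕ)
decreasing_by exact C.parent_lt i h

/-- `i` is a weak ancestor of `j` (`i = j` or `i` a strict ancestor of `j`). -/
def anc (C : ToricConstellation r) (i j : Fin r) : Bool :=
  decide (i = j) || (if h : 0 < (j : ℕ) then anc C i (C.parent j) else false)
termination_by (j : ℕ)
decreasing_by exact C.parent_lt j h

/-- The set of nodes weakly above `i` (`i` together with its descendants). -/
def weakAbove (C : ToricConstellation r) (i : Fin r) : Finset (Fin r) :=
  univ.filter (fun j => anc C i j = true)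

end ToricConstellation

/-- A 3-dimensional toric cluster: a toric constellation together with a positive
integer weight for each node. -/
structure ToricCluster (r : ℕ) extends ToricConstellation r where
  m : Fin r → ℤ
  m_pos : ∀ j, 0 < m j

namespace ToricCluster

open ToricConstellation

variable {r : ℕ}

/-- `M_{Q_i}(a,b) := Σ_{t ≥ 0, Q_i(a,b^t) ∈ C} m_{Q_i(a,b^t)}`. -/
def M (A : ToricCluster r) (i : Fin r) (a b : Fin 3) : ℤ :=
  ∑ j ∈ univ.filter (fun j => inChain A.toToricConstellation i a b j = true), A.m j

/-- The cluster is idealistic: the linear proximity inequalities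
`M_{Q_i}(a,b) + M_{Q_i}(b,a) ≤ m_{Q_i}` hold. -/
def Idealistic (A : ToricCluster r) : Prop :=
  ∀ i : Fin r, ∀ a b : Fin 3, a ≠ b → A.M i a b + A.M i b a ≤ A.m i

/-- The set of nodes `j` proximate to `i` (`j → i`). -/
def proxSet (A : ToricCluster r) (i : Fin r) : Finset (Fin r) :=
  univ.filter (fun j => Prox A.toToricConstellation j i)

/-- `B_i`: the set of nodes to which `i` is proximate. -/
def Bset (A : ToricCluster r) (i : Fin r) : Finset (Fin r) :=
  univ.filter (fun j => Prox A.toToricConstellation i j)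

/-- `A_i`: the children `k` of `i` for which there is no `l` with `i → l` and `k → l`. -/
def Aset (A : ToricCluster r) (i : Fin r) : Finset (Fin r) :=
  univ.filter (fun k => IsChild A.toToricConstellation k i ∧
    ¬ ∃ l, Prox A.toToricConstellation i l ∧ Prox A.toToricConstellation k l)

/-- The Euler characteristic `χ_i = χ(E_i°)`. -/
def chi (A : ToricCluster r) (i : Fin r) : ℤ :=
  3 + A.m i * (A.m i - 3)
    - ∑ j ∈ A.proxSet i, A.m j * (A.m j - 1)
    + ∑ j ∈ A.proxSet i,
        (A.m j - ∑ k ∈ (A.proxSet i).filter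
          (fun k => LinProx A.toToricConstellation k j), A.m k)
    + ∑ j ∈ A.Bset i,
        (A.m i - ∑ k ∈ (A.proxSet j).filter
          (fun k => LinProx A.toToricConstellation k i), A.m k)
    - ((A.Aset i).card : ℤ) - 2 * ((A.Bset i).card : ℤ)
    + (((A.Bset i).card.choose 2 : ℕ) : ℤ)

/-- `D_i = m_i² − Σ_{j→i} m_j²`. -/
def D (A : ToricCluster r) (i : Fin r) : ℤ :=
  A.m i ^ 2 - ∑ j ∈ A.proxSet i, A.m j ^ 2

/-- `r_{ab} = m_i − M_{Q_i}(a,b) − M_{Q_i}(b,a)`. -/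
def rab (A : ToricCluster r) (i : Fin r) (a b : Fin 3) : ℤ :=
  A.m i - A.M i a b - A.M i b a

/-- `R_i = r̂_{12} + r̂_{13} + r̂_{23}`, where `r̂_{ab} = r_{ab}` if the remaining third
label does not appear under `Q_i`, and `r̂_{ab} = 0` otherwise.  (Labels `1,2,3` are
encoded as `0,1,2 : Fin 3`.) -/
def R (A : ToricCluster r) (i : Fin r) : ℤ :=
  (if (2 : Fin 3) ∉ labelsUnder A.toToricConstellation i then A.rab i 0 1 else 0)
  + (if (1 : Fin 3) ∉ labelsUnder A.toToricConstellation i then A.rab i 0 2 else 0)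
  + (if (0 : Fin 3) ∉ labelsUnder A.toToricConstellation i then A.rab i 1 2 else 0)

/-- `T_i = 3 − #A_i − 2·#B_i + (#B_i choose 2)`. -/
def T (A : ToricCluster r) (i : Fin r) : ℤ :=
  3 - ((A.Aset i).card : ℤ) - 2 * ((A.Bset i).card : ℤ)
    + (((A.Bset i).card.choose 2 : ℕ) : ℤ)

/-- The nodes to which `i` is proximate, of smaller index: the sums in the recursive
definitions of the numerical data range over the nodes to which `i` is proximate,
which are ancestors of `i` and hence have smaller index (making the recursion
well-founded). -/
def anteSet (A : ToricCluster r) (i : Fin r) : Finset (Fin r) :=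
  univ.filter (fun j => (j : ℕ) < (i : ℕ) ∧ Prox A.toToricConstellation i j)

/-- The numerical datum `N_i := m_i + Σ_{j : i→j} N_j`. -/
def N (A : ToricCluster r) (i : Fin r) : ℤ :=
  A.m i + ∑ j ∈ (A.anteSet i).attach, N A j.1
termination_by (i : ℕ)
decreasing_by
  have hj := j.2
  simp only [anteSet, Finset.mem_filter] at hj
  exact hj.2.1

/-- The numerical datum `ν_i := 3 + Σ_{j : i→j} (ν_j − 1)`. -/
def nu (A : ToricCluster r) (i : Fin r) : ℤ :=
  3 + ∑ j ∈ (A.anteSet i).attach, (nu A j.1 - 1)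
termination_by (i : ℕ)
decreasing_by
  have hj := j.2
  simp only [anteSet, Finset.mem_filter] at hj
  exact hj.2.1

end ToricCluster


open ToricConstellation ToricCluster


open ToricConstellation ToricCluster

namespace ToricConstellation

variable {r : ℕ} (C : ToricConstellation r)

lemma cone_root {i : Fin r} (h : (i : ℕ) = 0) :
    C.cone i = fun a => Pi.single a 1 := by
  rw [cone]; simp [h]

lemma cone_child {i : Fin r} (h : 0 < (i : ℕ)) :
    C.cone i = Function.update (C.cone (C.parent i)) (C.label i)
      (∑ a, C.cone (C.parent i) a) := by
  rw [cone]; simp [h]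

/-- coordinate sum -/
def sg (u : Fin 3 → ℤ) : ℤ := ∑ b, u b

lemma sg_single (c : Fin 3) : sg (Pi.single c 1 : Fin 3 → ℤ) = 1 := by
  simp [sg, Pi.single_apply]

lemma sg_sum {s : Finset (Fin 3)} (f : Fin 3 → (Fin 3 → ℤ)) :
    sg (∑ a ∈ s, f a) = ∑ a ∈ s, sg (f a) := by
  simp [sg]; rw [Finset.sum_comm]

/-- strong induction helper on node index -/
lemma node_ind {P : Fin r → Prop}
    (h : ∀ k : Fin r, (∀ k' : Fin r, (k' : ℕ) < (k : ℕ) → P k') → P k) :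
    ∀ k, P k := by
  have key : ∀ n : ℕ, ∀ k : Fin r, (k : ℕ) < n → P k := by
    intro n
    induction n with
    | zero => intro k hk; omega
    | succ n ih =>
      intro k hk
      exact h k (fun k' hk' => ih k' (by omega))
  exact fun k => key ((k : ℕ) + 1) k (by omega)

lemma sg_cone_pos : ∀ i : Fin r, ∀ c : Fin 3, 1 ≤ sg (C.cone i c) := by
  apply node_ind
  intro k ih c
  by_cases h : 0 < (k : ℕ)
  · rw [cone_child C h]
    rcases eq_or_ne c (C.label k) with hc | hc
    · subst hc
      rw [Function.update_self, sg_sum]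
      calc (1 : ℤ) ≤ 3 := by norm_num
        _ = ∑ _a : Fin 3, (1 : ℤ) := by simp
        _ ≤ _ := Finset.sum_le_sum (fun a _ => ih (C.parent k) (C.parent_lt k h) a)
    · rw [Function.update_of_ne hc]
      exact ih (C.parent k) (C.parent_lt k h) c
  · rw [cone_root C (by omega)]
    simp [sg_single]

lemma sg_v_ge (i : Fin r) : 3 ≤ sg (C.v i) := by
  rw [v, sg_sum]
  calc (3 : ℤ) = ∑ _a : Fin 3, (1 : ℤ) := by simp
    _ ≤ _ := Finset.sum_le_sum (fun a _ => C.sg_cone_pos i a)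

end ToricConstellation

namespace ToricConstellation

variable {r : ℕ} (C : ToricConstellation r)

/-- dual coordinate vectors -/
def psi (q : Fin r) : Fin 3 → (Fin 3 → ℤ) :=
  if h : 0 < (q : ℕ) then
    fun a => if a = C.label q then psi (C.parent q) a
      else psi (C.parent q) a - psi (C.parent q) (C.label q)
  else fun a => Pi.single a 1
termination_by (q : ℕ)
decreasing_by all_goals exact C.parent_lt q h

lemma psi_root {q : Fin r} (h : (q : ℕ) = 0) : C.psi q = fun a => Pi.single a 1 := by
  rw [psi]; simp [h]

lemma psi_child {q : Fin r} (h : 0 < (q : ℕ)) :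
    C.psi q = fun a => if a = C.label q then C.psi (C.parent q) a
      else C.psi (C.parent q) a - C.psi (C.parent q) (C.label q) := by
  rw [psi]; simp [h]

/-- the coordinate of `x` at position `a` in the basis `cone q` -/
def dd (q : Fin r) (a : Fin 3) (x : Fin 3 → ℤ) : ℤ := ∑ b, C.psi q a b * x b

lemma dd_add (q : Fin r) (a : Fin 3) (x y : Fin 3 → ℤ) :
    C.dd q a (x + y) = C.dd q a x + C.dd q a y := by
  simp [dd, mul_add, Finset.sum_add_distrib]

lemma dd_sum (q : Fin r) (a : Fin 3) {s : Finset (Fin 3)} (f : Fin 3 → (Fin 3 → ℤ)) :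
    C.dd q a (∑ c ∈ s, f c) = ∑ c ∈ s, C.dd q a (f c) := by
  simp [dd, Finset.mul_sum]
  rw [Finset.sum_comm]

lemma dd_child_eq {q : Fin r} (h : 0 < (q : ℕ)) (x : Fin 3 → ℤ) :
    C.dd q (C.label q) x = C.dd (C.parent q) (C.label q) x := by
  simp [dd, psi_child C h]

lemma dd_child_ne {q : Fin r} (h : 0 < (q : ℕ)) {a : Fin 3} (ha : a ≠ C.label q)
    (x : Fin 3 → ℤ) :
    C.dd q a x = C.dd (C.parent q) a x - C.dd (C.parent q) (C.label q) x := by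
  simp [dd, psi_child C h, ha, sub_mul, Finset.sum_sub_distrib]

lemma dual : ∀ q : Fin r, ∀ a b : Fin 3,
    C.dd q a (C.cone q b) = if a = b then 1 else 0 := by
  apply node_ind
  intro q ih a b
  by_cases h : 0 < (q : ℕ)
  · have ihp := ih (C.parent q) (C.parent_lt q h)
    have hdv : ∀ a', C.dd (C.parent q) a' (C.v (C.parent q)) = 1 := by
      intro a'
      rw [v, dd_sum]
      simp [ihp]
    rw [cone_child C h]
    rcases eq_or_ne b (C.label q) with hb | hb
    · subst hb
      rw [Function.update_self]
      rcases eq_or_ne a (C.label q) with ha | ha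
      · subst ha; rw [dd_child_eq C h]
        have := hdv (C.label q); rw [v] at this
        simp [this]
      · rw [dd_child_ne C h ha]
        simp only [v] at hdv
        simp [ha, hdv, ihp, ha]
    · rw [Function.update_of_ne hb]
      rcases eq_or_ne a (C.label q) with ha | ha
      · subst ha; rw [dd_child_eq C h, ihp]
      · rw [dd_child_ne C h ha, ihp, ihp]
        simp [hb, Ne.symm hb]
  · have h0 : (q:ℕ) = 0 := by omega
    rw [cone_root C h0]
    simp only [dd, psi_root C h0]
    simp [Pi.single_apply]
    rcases eq_or_ne a b with h' | h' <;> simp [h']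
    exact fun hab => absurd hab.symm h'

lemma dd_v (q : Fin r) (a : Fin 3) : C.dd q a (C.v q) = 1 := by
  rw [v, dd_sum]
  simp [dual]

end ToricConstellation

namespace ToricConstellation

variable {r : ℕ} (C : ToricConstellation r)

lemma anc_unfold (i j : Fin r) :
    C.anc i j = (decide (i = j) ||
      (if h : 0 < (j : ℕ) then C.anc i (C.parent j) else false)) := by
  rw [anc]

lemma anc_refl (i : Fin r) : C.anc i i = true := by
  rw [anc_unfold]; simp

lemma anc_step {i j : Fin r} (h : 0 < (j : ℕ)) (h2 : C.anc i (C.parent j) = true) :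
    C.anc i j = true := by
  rw [anc_unfold]; simp [h, h2]

lemma anc_of_root {i : Fin r} (h : (i : ℕ) = 0) : ∀ j, C.anc i j = true := by
  apply node_ind
  intro j ih
  by_cases hj : 0 < (j : ℕ)
  · exact C.anc_step hj (ih _ (C.parent_lt j hj))
  · have : i = j := Fin.ext (by omega)
    rw [this]; exact C.anc_refl j

lemma anc_le : ∀ j i : Fin r, C.anc i j = true → (i : ℕ) ≤ (j : ℕ) := by
  apply node_ind
  intro j ih i h
  rw [anc_unfold] at h
  rcases Bool.or_eq_true_iff.mp h with h' | h'
  · rw [of_decide_eq_true h']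
  · by_cases hj : 0 < (j : ℕ)
    · simp only [hj, dif_pos] at h'
      have := ih (C.parent j) (C.parent_lt j hj) i h'
      have := C.parent_lt j hj
      omega
    · simp [hj] at h'

lemma anc_cases {i j : Fin r} (h : C.anc i j = true) :
    i = j ∨ (0 < (j : ℕ) ∧ C.anc i (C.parent j) = true) := by
  rw [anc_unfold] at h
  rcases Bool.or_eq_true_iff.mp h with h' | h'
  · exact Or.inl (of_decide_eq_true h')
  · by_cases hj : 0 < (j : ℕ)
    · simp only [hj, dif_pos] at h'
      exact Or.inr ⟨hj, h'⟩
    · simp [hj] at h'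

lemma v_child {p : Fin r} (h : 0 < (p : ℕ)) :
    C.v p = C.v (C.parent p) + ∑ c ∈ univ \ {C.label p}, C.cone (C.parent p) c := by
  rw [v, cone_child C h, Finset.sum_update_of_mem (Finset.mem_univ _)]
  rfl

lemma nonneg_subtree : ∀ p q : Fin r, C.anc q p = true →
    (∀ a c : Fin 3, 0 ≤ C.dd q a (C.cone p c)) ∧ (∀ a : Fin 3, 1 ≤ C.dd q a (C.v p)) := by
  apply node_ind
  intro p ih q hanc
  rcases C.anc_cases hanc with rfl | ⟨hp, hanc'⟩
  · constructor
    · intro a c; rw [dual]; split <;> norm_num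
    · intro a; rw [dd_v]
  · have ihp := ih (C.parent p) (C.parent_lt p hp) q hanc'
    have hcone : ∀ a c, 0 ≤ C.dd q a (C.cone p c) := by
      intro a c
      rw [cone_child C hp]
      rcases eq_or_ne c (C.label p) with hc | hc
      · subst hc; rw [Function.update_self]
        have := ihp.2 a
        rw [v] at this; omega
      · rw [Function.update_of_ne hc]; exact ihp.1 a c
    refine ⟨hcone, fun a => ?_⟩
    rw [v_child C hp, dd_add, dd_sum]
    have h1 := ihp.2 a
    have h2 : 0 ≤ ∑ c ∈ univ \ {C.label p}, C.dd q a (C.cone (C.parent p) c) :=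
      Finset.sum_nonneg (fun c _ => ihp.1 a c)
    omega

lemma strict_min {q p : Fin r} (hq : 0 < (q : ℕ)) (h : C.anc q p = true)
    {a : Fin 3} (ha : a ≠ C.label q) :
    C.dd (C.parent q) (C.label q) (C.v p) < C.dd (C.parent q) a (C.v p) := by
  have h1 := (C.nonneg_subtree p q h).2 a
  rw [dd_child_ne C hq ha] at h1
  omega

lemma child_label_unique {k k' : Fin r} (hk : 0 < (k : ℕ)) (hk' : 0 < (k' : ℕ))
    (hp : C.parent k = C.parent k') (hl : C.label k = C.label k') : k = k' := by
  by_contra hne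
  exact C.label_distinct k k' hk hk' hne hp hl

lemma exists_child_anc : ∀ p Q : Fin r, C.anc Q p = true → p ≠ Q →
    ∃ q' : Fin r, 0 < (q' : ℕ) ∧ C.parent q' = Q ∧ C.anc q' p = true := by
  apply node_ind
  intro p ih Q hanc hne
  rcases C.anc_cases hanc with rfl | ⟨hp, hanc'⟩
  · exact absurd rfl hne
  · rcases eq_or_ne (C.parent p) Q with hP | hP
    · exact ⟨p, hp, hP, C.anc_refl p⟩
    · obtain ⟨q', h1, h2, h3⟩ := ih (C.parent p) (C.parent_lt p hp) Q hanc' hP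
      exact ⟨q', h1, h2, C.anc_step hp h3⟩

lemma exists_ne_label (L : Fin 3) : ∃ a : Fin 3, a ≠ L := by
  fin_cases L
  · exact ⟨1, by decide⟩
  · exact ⟨0, by decide⟩
  · exact ⟨0, by decide⟩

lemma claimA : ∀ q p : Fin r, (∀ a, 1 ≤ C.dd q a (C.v p)) → C.anc q p = true := by
  apply node_ind
  intro q ih p hd
  by_cases hq : 0 < (q : ℕ)
  · have hQlt := C.parent_lt q hq
    have hdQ : ∀ a, 1 ≤ C.dd (C.parent q) a (C.v p) := by
      intro a
      rcases eq_or_ne a (C.label q) with ha | ha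
      · subst ha; have := hd (C.label q); rw [dd_child_eq C hq] at this; exact this
      · have h1 := hd a; rw [dd_child_ne C hq ha] at h1
        have h2 := hd (C.label q); rw [dd_child_eq C hq] at h2
        omega
    have hancQ : C.anc (C.parent q) p = true := ih (C.parent q) hQlt p hdQ
    have hpQ : p ≠ C.parent q := by
      rintro rfl
      obtain ⟨a, ha⟩ := exists_ne_label (C.label q)
      have h1 := hd a
      rw [dd_child_ne C hq ha, dd_v, dd_v] at h1
      omega
    obtain ⟨q', h1, h2, h3⟩ := C.exists_child_anc p (C.parent q) hancQ hpQ
    rcases eq_or_ne q' q with rfl | hne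
    · exact h3
    · exfalso
      have hll : C.label q' ≠ C.label q := by
        intro hl
        exact hne (C.child_label_unique h1 hq h2 hl)
      have hs1 := C.strict_min h1 h3 (a := C.label q) (Ne.symm hll)
      rw [h2] at hs1
      have h4 := hd (C.label q')
      rw [dd_child_ne C hq hll] at h4
      have h5 := hd (C.label q)
      rw [dd_child_eq C hq] at h5
      omega
  · exact C.anc_of_root (by omega) p

lemma v_inj {p q : Fin r} (h : C.v p = C.v q) : p = q := by
  have h1 : C.anc q p = true := C.claimA q p (fun a => by rw [h, dd_v])
  have h2 : C.anc p q = true := C.claimA p q (fun a => by rw [← h, dd_v])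
  have := C.anc_le p q h1
  have := C.anc_le q p h2
  exact Fin.ext (by omega)

end ToricConstellation

namespace ToricConstellation

variable {r : ℕ} (C : ToricConstellation r)

/-- `v l` sits at entry `c` of `cone k` -/
def Entry (l k : Fin r) (c : Fin 3) : Prop :=
  if h : 0 < (k : ℕ) then ((C.parent k = l ∧ C.label k = c) ∨
    (C.label k ≠ c ∧ Entry l (C.parent k) c)) else False
termination_by (k : ℕ)
decreasing_by exact C.parent_lt k h

lemma entry_unfold (l k : Fin r) (c : Fin 3) :
    C.Entry l k c ↔ 0 < (k : ℕ) ∧ ((C.parent k = l ∧ C.label k = c) ∨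
      (C.label k ≠ c ∧ C.Entry l (C.parent k) c)) := by
  rw [Entry]
  by_cases h : 0 < (k : ℕ) <;> simp [h]

lemma cone_eq_v_iff : ∀ k l : Fin r, ∀ c : Fin 3,
    C.cone k c = C.v l ↔ C.Entry l k c := by
  apply node_ind
  intro k ih l c
  by_cases hk : 0 < (k : ℕ)
  · rw [cone_child C hk, entry_unfold]
    rcases eq_or_ne c (C.label k) with hc | hc
    · subst hc
      rw [Function.update_self]
      constructor
      · intro h
        exact ⟨hk, Or.inl ⟨C.v_inj h, rfl⟩⟩
      · rintro ⟨-, h | h⟩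
        · rw [← h.1]; rfl
        · exact absurd rfl h.1
    · rw [Function.update_of_ne hc, ih (C.parent k) (C.parent_lt k hk) l c]
      constructor
      · intro h; exact ⟨hk, Or.inr ⟨Ne.symm hc, h⟩⟩
      · rintro ⟨-, h | h⟩
        · exact absurd h.2 (Ne.symm hc)
        · exact h.2
  · rw [cone_root C (by omega)]
    constructor
    · intro h
      have h1 := C.sg_v_ge l
      rw [← h, sg_single] at h1
      omega
    · intro h
      rw [entry_unfold] at h
      omega
  
lemma entry_lt : ∀ k l : Fin r, ∀ c : Fin 3, C.Entry l k c → (l : ℕ) < (k : ℕ) := by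
  apply node_ind
  intro k ih l c h
  rw [entry_unfold] at h
  obtain ⟨hk, h | h⟩ := h
  · have := C.parent_lt k hk; rw [h.1] at this; omega
  · have := ih (C.parent k) (C.parent_lt k hk) l c h.2
    have := C.parent_lt k hk
    omega

lemma entry_right_unique {l l' k : Fin r} {c : Fin 3}
    (h : C.Entry l k c) (h' : C.Entry l' k c) : l = l' := by
  rw [← cone_eq_v_iff] at h h'
  exact C.v_inj (h ▸ h')

lemma entry_left_unique {l k : Fin r} {c c' : Fin 3}
    (h : C.Entry l k c) (h' : C.Entry l k c') : c = c' := by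
  rw [← cone_eq_v_iff] at h h'
  by_contra hne
  have e := congrArg (C.dd k c) (h'.trans h.symm)
  rw [C.dual k c c', C.dual k c c] at e
  simp [hne] at e

lemma prox_iff_entry (k i : Fin r) : C.Prox k i ↔ ∃ c, C.Entry i k c := by
  unfold Prox
  constructor
  · rintro ⟨-, c, h⟩
    exact ⟨c, (C.cone_eq_v_iff k i c).mp h⟩
  · rintro ⟨c, h⟩
    refine ⟨?_, c, (C.cone_eq_v_iff k i c).mpr h⟩
    have := C.entry_lt k i c h
    exact fun he => by rw [he] at this; omega

lemma inChain_unfold (i k : Fin r) (a b : Fin 3) :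
    C.inChain i a b k = if 0 < (k : ℕ) then
      ((decide (C.parent k = i) && decide (C.label k = a)) ||
        (decide (C.label k = b) && C.inChain i a b (C.parent k))) else false := by
  rw [inChain]
  split <;> simp_all

lemma inChain_entry {a b : Fin 3} (hab : a ≠ b) :
    ∀ k i : Fin r, C.inChain i a b k = true → C.Entry i k a := by
  apply node_ind
  intro k ih i h
  rw [inChain_unfold] at h
  by_cases hk : 0 < (k : ℕ)
  · rw [if_pos hk] at h
    rw [entry_unfold]
    rcases Bool.or_eq_true_iff.mp h with h' | h'
    · obtain ⟨h1, h2⟩ := Bool.and_eq_true_iff.mp h'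
      exact ⟨hk, Or.inl ⟨of_decide_eq_true h1, of_decide_eq_true h2⟩⟩
    · obtain ⟨h1, h2⟩ := Bool.and_eq_true_iff.mp h'
      refine ⟨hk, Or.inr ⟨?_, ih (C.parent k) (C.parent_lt k hk) i h2⟩⟩
      rw [of_decide_eq_true h1]; exact Ne.symm hab
  · rw [if_neg hk] at h; exact absurd h (by simp)

lemma inChain_child {k i : Fin r} {a b : Fin 3} (hk : 0 < (k : ℕ))
    (hp : C.parent k = i) (hl : C.label k = a) : C.inChain i a b k = true := by
  rw [inChain_unfold, if_pos hk]
  simp [hp, hl]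

lemma inChain_step {k i : Fin r} {a b : Fin 3} (hk : 0 < (k : ℕ))
    (hl : C.label k = b) (hc : C.inChain i a b (C.parent k) = true) :
    C.inChain i a b k = true := by
  rw [inChain_unfold, if_pos hk]
  simp [hl, hc]

lemma labelsUnder_root {i : Fin r} (h : ¬ 0 < (i : ℕ)) : C.labelsUnder i = ∅ := by
  rw [labelsUnder]; simp [h]

lemma labelsUnder_child {i : Fin r} (h : 0 < (i : ℕ)) :
    C.labelsUnder i = insert (C.label i) (C.labelsUnder (C.parent i)) := by
  rw [labelsUnder]; simp [h]

lemma mem_labelsUnder_iff : ∀ i : Fin r, ∀ c : Fin 3,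
    c ∈ C.labelsUnder i ↔ ∃ l, C.Entry l i c := by
  apply node_ind
  intro i ih c
  by_cases hi : 0 < (i : ℕ)
  · rw [labelsUnder_child C hi, Finset.mem_insert,
      ih (C.parent i) (C.parent_lt i hi) c]
    constructor
    · rintro (rfl | ⟨l, hl⟩)
      · exact ⟨C.parent i, (C.entry_unfold _ _ _).mpr ⟨hi, Or.inl ⟨rfl, rfl⟩⟩⟩
      · rcases eq_or_ne (C.label i) c with he | he
        · exact ⟨C.parent i, (C.entry_unfold _ _ _).mpr ⟨hi, Or.inl ⟨rfl, he⟩⟩⟩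
        · exact ⟨l, (C.entry_unfold _ _ _).mpr ⟨hi, Or.inr ⟨he, hl⟩⟩⟩
    · rintro ⟨l, hl⟩
      rw [entry_unfold] at hl
      rcases hl.2 with h' | h'
      · exact Or.inl h'.2.symm
      · exact Or.inr ⟨l, h'.2⟩
  · rw [labelsUnder_root C hi]
    simp only [Finset.notMem_empty, false_iff]
    rintro ⟨l, hl⟩
    rw [entry_unfold] at hl
    omega

/-- the node `l` with `Entry l i c`, when `c ∈ labelsUnder i` -/
def anchor (i : Fin r) (c : Fin 3) : Fin r :=
  if h : 0 < (i : ℕ) then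
    (if C.label i = c then C.parent i else anchor (C.parent i) c)
  else i
termination_by (i : ℕ)
decreasing_by exact C.parent_lt i h

lemma anchor_entry : ∀ i : Fin r, ∀ c : Fin 3, c ∈ C.labelsUnder i →
    C.Entry (C.anchor i c) i c := by
  apply node_ind
  intro i ih c hc
  by_cases hi : 0 < (i : ℕ)
  · rw [anchor, dif_pos hi]
    rcases eq_or_ne (C.label i) c with he | he
    · rw [if_pos he, entry_unfold]
      exact ⟨hi, Or.inl ⟨rfl, he⟩⟩
    · rw [if_neg he, entry_unfold]
      rw [labelsUnder_child C hi, Finset.mem_insert] at hc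
      rcases hc with rfl | hc
      · exact absurd rfl he
      · exact ⟨hi, Or.inr ⟨he, ih (C.parent i) (C.parent_lt i hi) c hc⟩⟩
  · rw [labelsUnder_root C hi] at hc
    simp at hc

end ToricConstellation

namespace ToricConstellation

variable {r : ℕ} (C : ToricConstellation r)

lemma entry_forced {i j : Fin r} {a : Fin 3} (hj0 : 0 < (j : ℕ))
    (hpj : C.parent j = i) (hlab : C.label j = a)
    (hci : ∀ k, C.IsChild k i → k = j) (hcj : ∀ k, C.IsChild k j → C.label k = a) :
    ∀ k : Fin r, ∀ c : Fin 3, C.Entry i k c → k = j ∧ c = a := by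
  apply node_ind
  intro k ih c h
  rw [entry_unfold] at h
  obtain ⟨hk, h | h⟩ := h
  · have hkj : k = j := hci k ⟨hk, h.1⟩
    subst hkj
    exact ⟨rfl, h.2 ▸ hlab ▸ rfl⟩
  · obtain ⟨hpk, hca⟩ := ih (C.parent k) (C.parent_lt k hk) c h.2
    exfalso
    have := hcj k ⟨hk, hpk⟩
    exact h.1 (this.trans hca.symm)

end ToricConstellation

namespace ToricCluster

open ToricConstellation

variable {r : ℕ}

lemma m_nonneg (A : ToricCluster r) (k : Fin r) : 0 ≤ A.m k := le_of_lt (A.m_pos k)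

lemma key_lemma (A : ToricCluster r) (hA : A.Idealistic) (i j : Fin r) (a : Fin 3)
    (hj0 : 0 < (j : ℕ)) (hpj : A.toToricConstellation.parent j = i)
    (hlab : A.toToricConstellation.label j = a) (hm : A.m j = A.m i)
    {b : Fin 3} (hb : b ≠ a) :
    (∀ k, A.toToricConstellation.inChain i b a k = false) ∧
      (∀ k, A.toToricConstellation.inChain i a b k = true → k = j) := by
  have hIdeal := hA i a b (Ne.symm hb)
  have hjChain : A.toToricConstellation.inChain i a b j = true :=
    A.toToricConstellation.inChain_child hj0 hpj hlab
  have h1 : A.m i ≤ A.M i a b := by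
    rw [M, ← hm]
    exact Finset.single_le_sum (fun k _ => A.m_nonneg k)
      (Finset.mem_filter.mpr ⟨Finset.mem_univ j, hjChain⟩)
  constructor
  · intro k
    by_contra hk
    have hk' : A.toToricConstellation.inChain i b a k = true := by
      revert hk; cases (A.toToricConstellation.inChain i b a k) <;> simp
    have h2 : A.m k ≤ A.M i b a :=
      Finset.single_le_sum (fun k _ => A.m_nonneg k)
        (Finset.mem_filter.mpr ⟨Finset.mem_univ k, hk'⟩)
    have := A.m_pos k
    omega
  · intro k hk
    by_contra hne
    have h2 : 0 ≤ A.M i b a := Finset.sum_nonneg (fun k _ => A.m_nonneg k)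
    have hsub : ({j, k} : Finset (Fin r)) ⊆
        Finset.univ.filter (fun k' => A.toToricConstellation.inChain i a b k' = true) := by
      intro x hx
      rcases Finset.mem_insert.mp hx with rfl | hx
      · exact Finset.mem_filter.mpr ⟨Finset.mem_univ _, hjChain⟩
      · rw [Finset.mem_singleton.mp hx]
        exact Finset.mem_filter.mpr ⟨Finset.mem_univ _, hk⟩
    have h3 : A.m j + A.m k ≤ A.M i a b := by
      rw [M]
      calc A.m j + A.m k = ∑ x ∈ ({j, k} : Finset (Fin r)), A.m x := by
            rw [Finset.sum_pair (fun h => hne h.symm)]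
        _ ≤ _ := Finset.sum_le_sum_of_subset_of_nonneg hsub
              (fun x _ _ => A.m_nonneg x)
    have := A.m_pos k
    omega

end ToricCluster

theorem stmt6' {r : ℕ} (A : ToricCluster r) (hA : A.Idealistic)
    (i j : Fin r) (a : Fin 3)
    (hchild : IsChild A.toToricConstellation j i)
    (hlab : A.toToricConstellation.label j = a)
    (hm : A.m j = A.m i) :
    (a ∈ labelsUnder A.toToricConstellation i → A.chi i = 0)
    ∧ (labelsUnder A.toToricConstellation i = ∅ → A.chi i = 2 - A.m i)
    ∧ (a ∉ labelsUnder A.toToricConstellation i →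
        (labelsUnder A.toToricConstellation i).card = 1 → A.chi i = 1 - A.m i)
    ∧ (a ∉ labelsUnder A.toToricConstellation i →
        (labelsUnder A.toToricConstellation i).card = 2 → A.chi i = -A.m i) := by
  obtain ⟨hj0, hpj⟩ := hchild
  have hkey := fun {b : Fin 3} (hb : b ≠ a) => A.key_lemma hA i j a hj0 hpj hlab hm hb
  -- the only child of i is j
  have hci : ∀ k, A.toToricConstellation.IsChild k i → k = j := by
    rintro k ⟨hk0, hpk⟩
    rcases eq_or_ne (A.toToricConstellation.label k) a with hl | hl
    · exact A.toToricConstellation.child_label_unique hk0 hj0 (hpk.trans hpj.symm)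
        (hl.trans hlab.symm)
    · exfalso
      have h1 := (hkey hl).1 k
      rw [A.toToricConstellation.inChain_child hk0 hpk rfl] at h1
      exact Bool.true_eq_false ▸ (by simpa using h1)
  -- every child of j has label a
  have hcj : ∀ k, A.toToricConstellation.IsChild k j → A.toToricConstellation.label k = a := by
    rintro k ⟨hk0, hpk⟩
    by_contra hl
    have hchain : A.toToricConstellation.inChain i a (A.toToricConstellation.label k) k = true := by
      refine A.toToricConstellation.inChain_step hk0 rfl ?_
      rw [hpk]
      exact A.toToricConstellation.inChain_child hj0 hpj hlab
    have hkj := (hkey hl).2 k hchain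
    have := A.toToricConstellation.parent_lt k hk0
    rw [hpk, hkj] at this
    omega
  have hentry := A.toToricConstellation.entry_forced hj0 hpj hlab hci hcj
  have hEja : A.toToricConstellation.Entry i j a :=
    (A.toToricConstellation.entry_unfold i j a).mpr ⟨hj0, Or.inl ⟨hpj, hlab⟩⟩
  have hproxI : A.proxSet i = {j} := by
    ext k
    simp only [proxSet, Finset.mem_filter, Finset.mem_univ, true_and, Finset.mem_singleton]
    rw [prox_iff_entry]
    constructor
    · rintro ⟨c, hc⟩; exact (hentry k c hc).1
    · rintro rfl; exact ⟨a, hEja⟩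
  have hlin : ∀ k, LinProx A.toToricConstellation k i ↔ k = j := by
    intro k
    constructor
    · rintro ⟨a', b', hne, hch⟩
      exact (hentry k a' (A.toToricConstellation.inChain_entry hne k i hch)).1
    · rintro rfl
      obtain ⟨b, hb⟩ := exists_ne_label a
      exact ⟨a, b, Ne.symm hb, A.toToricConstellation.inChain_child hj0 hpj hlab⟩
  have hnlin : ¬ LinProx A.toToricConstellation j j := by
    rintro ⟨a', b', hne, hch⟩
    have := A.toToricConstellation.entry_lt j j a'
      (A.toToricConstellation.inChain_entry hne j j hch)
    omega
  have hproxJ : ∀ l, Prox A.toToricConstellation j l ↔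
      ((∃ c, c ≠ a ∧ A.toToricConstellation.Entry l i c) ∨ l = i) := by
    intro l
    rw [prox_iff_entry]
    constructor
    · rintro ⟨c, hc⟩
      rw [ToricConstellation.entry_unfold] at hc
      rcases hc.2 with h | h
      · exact Or.inr (hpj.symm.trans h.1).symm
      · refine Or.inl ⟨c, ?_, by rw [← hpj]; exact h.2⟩
        rw [hlab] at h
        exact Ne.symm h.1
    · rintro (⟨c, hca, he⟩ | rfl)
      · refine ⟨c, (A.toToricConstellation.entry_unfold l j c).mpr
          ⟨hj0, Or.inr ⟨?_, by rw [hpj]; exact he⟩⟩⟩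
        rw [hlab]; exact Ne.symm hca
      · exact ⟨a, hEja⟩
  have hanchor := fun (c : Fin 3) (hc : c ∈ labelsUnder A.toToricConstellation i) =>
    A.toToricConstellation.anchor_entry i c hc
  have hB : A.Bset i = (labelsUnder A.toToricConstellation i).image
      (A.toToricConstellation.anchor i) := by
    ext l
    simp only [Bset, Finset.mem_filter, Finset.mem_univ, true_and, Finset.mem_image]
    rw [prox_iff_entry]
    constructor
    · rintro ⟨c, hc⟩
      have hmem : c ∈ labelsUnder A.toToricConstellation i :=
        (A.toToricConstellation.mem_labelsUnder_iff i c).mpr ⟨l, hc⟩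
      exact ⟨c, hmem, (A.toToricConstellation.entry_right_unique hc (hanchor c hmem)).symm⟩
    · rintro ⟨c, hc, rfl⟩
      exact ⟨c, hanchor c hc⟩
  have hinj : ∀ c ∈ labelsUnder A.toToricConstellation i,
      ∀ c' ∈ labelsUnder A.toToricConstellation i,
      A.toToricConstellation.anchor i c = A.toToricConstellation.anchor i c' → c = c' := by
    intro c hc c' hc' h
    exact A.toToricConstellation.entry_left_unique (hanchor c hc) (h ▸ hanchor c' hc')
  have hBcard : ((A.Bset i).card : ℤ) = ((labelsUnder A.toToricConstellation i).card : ℤ) := by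
    rw [hB, Finset.card_image_of_injOn (fun c hc c' hc' h =>
      hinj c (Finset.mem_coe.mp hc) c' (Finset.mem_coe.mp hc') h)]
  have hanchor_lt : ∀ c ∈ labelsUnder A.toToricConstellation i,
      ((A.toToricConstellation.anchor i c : ℕ) < (i : ℕ)) := by
    intro c hc
    exact A.toToricConstellation.entry_lt i _ c (hanchor c hc)
  have hProxAnchor : ∀ c ∈ labelsUnder A.toToricConstellation i,
      (Prox A.toToricConstellation j (A.toToricConstellation.anchor i c) ↔ c ≠ a) := by
    intro c hc
    rw [hproxJ]
    constructor
    · rintro (⟨c', hc'a, he'⟩ | hli)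
      · rwa [A.toToricConstellation.entry_left_unique (hanchor c hc) he']
      · have := hanchor_lt c hc
        rw [hli] at this
        omega
    · intro hca
      exact Or.inl ⟨c, hca, hanchor c hc⟩
  have hfilterProx : ∀ l, (A.proxSet l).filter
      (fun k => LinProx A.toToricConstellation k i) =
      if Prox A.toToricConstellation j l then {j} else ∅ := by
    intro l
    ext k
    simp only [Finset.mem_filter, proxSet, Finset.mem_univ, true_and]
    constructor
    · rintro ⟨hkl, hklin⟩
      have hkj := (hlin k).mp hklin
      subst hkj
      rw [if_pos hkl]
      exact Finset.mem_singleton_self k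
    · intro hk
      by_cases hp : Prox A.toToricConstellation j l
      · rw [if_pos hp, Finset.mem_singleton] at hk
        subst hk
        exact ⟨hp, (hlin k).mpr rfl⟩
      · rw [if_neg hp] at hk
        exact absurd hk (Finset.notMem_empty k)
  -- evaluate the three sums in chi
  have e1 : ∑ k ∈ A.proxSet i, A.m k * (A.m k - 1) = A.m i * (A.m i - 1) := by
    rw [hproxI, Finset.sum_singleton, hm]
  have e2 : ∑ k ∈ A.proxSet i, (A.m k - ∑ k' ∈ (A.proxSet i).filter
      (fun k' => LinProx A.toToricConstellation k' k), A.m k') = A.m i := by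
    rw [hproxI, Finset.sum_singleton, Finset.filter_singleton, if_neg hnlin,
      Finset.sum_empty, sub_zero, hm]
  have e3 : ∑ l ∈ A.Bset i, (A.m i - ∑ k ∈ (A.proxSet l).filter
      (fun k => LinProx A.toToricConstellation k i), A.m k) =
      (if a ∈ labelsUnder A.toToricConstellation i then A.m i else 0) := by
    have step1 : ∀ l, (∑ k ∈ (A.proxSet l).filter
        (fun k => LinProx A.toToricConstellation k i), A.m k) =
        (if Prox A.toToricConstellation j l then A.m i else 0) := by
      intro l
      rw [hfilterProx l]
      split
      · rw [Finset.sum_singleton, hm]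
      · rw [Finset.sum_empty]
    calc ∑ l ∈ A.Bset i, (A.m i - ∑ k ∈ (A.proxSet l).filter
          (fun k => LinProx A.toToricConstellation k i), A.m k)
        = ∑ l ∈ A.Bset i, (A.m i - if Prox A.toToricConstellation j l then A.m i else 0) :=
          Finset.sum_congr rfl (fun l _ => by rw [step1])
      _ = ∑ c ∈ labelsUnder A.toToricConstellation i, (A.m i -
            if Prox A.toToricConstellation j (A.toToricConstellation.anchor i c)
            then A.m i else 0) := by
          rw [hB, Finset.sum_image hinj]
      _ = ∑ c ∈ labelsUnder A.toToricConstellation i, (if c = a then A.m i else 0) := by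
          refine Finset.sum_congr rfl (fun c hc => ?_)
          rcases eq_or_ne c a with rfl | hca
          · rw [if_neg (fun h => ((hProxAnchor c hc).mp h) rfl), if_pos rfl, sub_zero]
          · rw [if_pos ((hProxAnchor c hc).mpr hca), if_neg hca, sub_self]
      _ = if a ∈ labelsUnder A.toToricConstellation i then A.m i else 0 :=
          Finset.sum_ite_eq' _ _ _
  -- the A set
  have hAsetEmpty : (∃ c, c ≠ a ∧ c ∈ labelsUnder A.toToricConstellation i) →
      A.Aset i = ∅ := by
    rintro ⟨c, hca, hcS⟩
    rw [Finset.eq_empty_iff_forall_notMem]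
    intro k hk
    simp only [Aset, Finset.mem_filter, Finset.mem_univ, true_and] at hk
    refine hk.2 ⟨A.toToricConstellation.anchor i c, ?_, ?_⟩
    · rw [prox_iff_entry]
      exact ⟨c, hanchor c hcS⟩
    · have hkj := hci k hk.1
      subst hkj
      exact (hproxJ _).mpr (Or.inl ⟨c, hca, hanchor c hcS⟩)
  have hAsetJ : (¬ ∃ c, c ≠ a ∧ c ∈ labelsUnder A.toToricConstellation i) →
      A.Aset i = {j} := by
    intro hno
    ext k
    simp only [Aset, Finset.mem_filter, Finset.mem_univ, true_and, Finset.mem_singleton]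
    constructor
    · rintro ⟨hk, -⟩
      exact hci k hk
    · rintro rfl
      refine ⟨⟨hj0, hpj⟩, ?_⟩
      rintro ⟨l, hil, hjl⟩
      rcases (hproxJ l).mp hjl with ⟨c, hca, he⟩ | rfl
      · exact hno ⟨c, hca, (A.toToricConstellation.mem_labelsUnder_iff i c).mpr ⟨l, he⟩⟩
      · exact hil.1 rfl
  have hchi : A.chi i = 3 + A.m i * (A.m i - 3) - A.m i * (A.m i - 1) + A.m i
      + (if a ∈ labelsUnder A.toToricConstellation i then A.m i else 0)
      - ((A.Aset i).card : ℤ)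
      - 2 * ((labelsUnder A.toToricConstellation i).card : ℤ)
      + ((Nat.choose (labelsUnder A.toToricConstellation i).card 2 : ℕ) : ℤ) := by
    rw [chi, e1, e2, e3, hBcard]
    rw [hB, Finset.card_image_of_injOn (fun c hc c' hc' h =>
      hinj c (Finset.mem_coe.mp hc) c' (Finset.mem_coe.mp hc') h)]
  refine ⟨?_, ?_, ?_, ?_⟩
  · -- (i) a ∈ S
    intro ha
    rw [hchi, if_pos ha]
    by_cases hex : ∃ c, c ≠ a ∧ c ∈ labelsUnder A.toToricConstellation i
    · rw [hAsetEmpty hex]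
      obtain ⟨c, hca, hcS⟩ := hex
      have hs2 : 2 ≤ (labelsUnder A.toToricConstellation i).card :=
        Finset.one_lt_card.mpr ⟨a, ha, c, hcS, Ne.symm hca⟩
      have hs3 : (labelsUnder A.toToricConstellation i).card ≤ 3 := by
        simpa using Finset.card_le_univ (labelsUnder A.toToricConstellation i)
      interval_cases h : (labelsUnder A.toToricConstellation i).card
      · norm_num [Nat.choose]; ring
      · norm_num [Nat.choose]; ring
    · rw [hAsetJ hex]
      have hS : labelsUnder A.toToricConstellation i = {a} := by
        ext c
        simp only [Finset.mem_singleton]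
        constructor
        · intro hc
          by_contra hca
          exact hex ⟨c, hca, hc⟩
        · rintro rfl; exact ha
      rw [hS]
      norm_num [Nat.choose]
      ring
  · -- (ii) root
    intro hS
    have hna : a ∉ labelsUnder A.toToricConstellation i := by rw [hS]; simp
    rw [hchi, if_neg hna, hS]
    rw [hAsetJ (by rw [hS]; rintro ⟨c, -, hc⟩; exact absurd hc (Finset.notMem_empty c))]
    norm_num [Nat.choose]
    ring
  · -- (iii) card 1
    intro hna h1
    rw [hchi, if_neg hna, h1]
    have hex : ∃ c, c ≠ a ∧ c ∈ labelsUnder A.toToricConstellation i := by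
      obtain ⟨c, hc⟩ := Finset.card_pos.mp
        (show 0 < (labelsUnder A.toToricConstellation i).card by omega)
      exact ⟨c, fun h => hna (h ▸ hc), hc⟩
    rw [hAsetEmpty hex]
    norm_num [Nat.choose]
    ring
  · -- (iv) card 2
    intro hna h2
    rw [hchi, if_neg hna, h2]
    have hex : ∃ c, c ≠ a ∧ c ∈ labelsUnder A.toToricConstellation i := by
      obtain ⟨c, hc⟩ := Finset.card_pos.mp
        (show 0 < (labelsUnder A.toToricConstellation i).card by omega)
      exact ⟨c, fun h => hna (h ▸ hc), hc⟩
    rw [hAsetEmpty hex]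
    norm_num [Nat.choose]
    ring


theorem stmt6 {r : ℕ} (A : ToricCluster r) (hA : A.Idealistic)
    (i j : Fin r) (a : Fin 3)
    (hchild : IsChild A.toToricConstellation j i)
    (hlab : A.toToricConstellation.label j = a)
    (hm : A.m j = A.m i) :
    (a ∈ labelsUnder A.toToricConstellation i → A.chi i = 0)
    ∧ (labelsUnder A.toToricConstellation i = ∅ → A.chi i = 2 - A.m i)
    ∧ (a ∉ labelsUnder A.toToricConstellation i →
        (labelsUnder A.toToricConstellation i).card = 1 → A.chi i = 1 - A.m i)
    ∧ (a ∉ labelsUnder A.toToricConstellation i →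
        (labelsUnder A.toToricConstellation i).card = 2 → A.chi i = -A.m i) := by
  exact stmt6' A hA i j a hchild hlab hm
end

section
/- For all integers i ≥ 2 and l ≥ 0 and all positive integers m, m_1, …, m_{i−1} with m_s ≥ 2m − 1 for every 1 ≤ s ≤ i−1, one has (2i+1)·((4+3l)·Σ_{s=1}^{i−1} m_s + (3+3l)·m) ≠ (i(8+6l)+2l+1)·(Σ_{s=1}^{i−1} m_s + m). -/
open Finset

theorem stmt18 (i l : ℕ) (hi : 2 ≤ i) (m : ℤ) (hm : 0 < m)
    (ms : ℕ → ℤ) (hms : ∀ s, 1 ≤ s → s ≤ i - 1 → 0 < ms s ∧ 2 * m - 1 ≤ ms s) :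
    (2 * (i : ℤ) + 1) * ((4 + 3 * (l : ℤ)) * (∑ s ∈ Finset.Icc 1 (i - 1), ms s)
        + (3 + 3 * (l : ℤ)) * m)
      ≠ ((i : ℤ) * (8 + 6 * (l : ℤ)) + 2 * (l : ℤ) + 1)
        * ((∑ s ∈ Finset.Icc 1 (i - 1), ms s) + m) := by
  intro h
  set S := ∑ s ∈ Finset.Icc 1 (i - 1), ms s with hSdef
  have hkey : ∀ s ∈ Finset.Icc 1 (i - 1), (2 * m - 1 : ℤ) ≤ ms s := fun s hs =>
    (hms s (Finset.mem_Icc.mp hs).1 (Finset.mem_Icc.mp hs).2).2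
  have hS : ((i - 1 : ℕ) : ℤ) * (2 * m - 1) ≤ S := by
    have := Finset.sum_le_sum hkey
    rw [Finset.sum_const, Nat.card_Icc, Nat.add_sub_cancel, nsmul_eq_mul] at this
    exact this
  have hcast : ((i - 1 : ℕ) : ℤ) = (i : ℤ) - 1 := by
    have : 1 ≤ i := by omega
    push_cast [Nat.cast_sub this]; ring
  rw [hcast] at hS
  have hi' : (2 : ℤ) ≤ (i : ℤ) := by exact_mod_cast hi
  have hl : (0 : ℤ) ≤ (l : ℤ) := Int.natCast_nonneg l
  have heq : S * ((l : ℤ) + 3) = m * (2 * (i : ℤ) - (l : ℤ) - 2) := by linear_combination h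
  have hS0 : (0 : ℤ) ≤ S := by nlinarith
  nlinarith [heq, hS, mul_nonneg hl hS0, mul_nonneg hl hm.le,
    mul_pos (show (0:ℤ) < (i:ℤ) - 1 by linarith) (show (0:ℤ) < 4 * m - 3 by linarith)]
end
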